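/- The characteristic polynomial of the 7×7 matrix M is x·(x − 2)³·(x − 3)³; equivalently, the eigenvalues of M, with multiplicity, are {0, 2, 2, 2, 3, 3, 3}. -/

import Mathlib

set_option maxRecDepth 10000
set_option maxHeartbeats 1000000

open Matrix Real MeasureTheory

noncomputable def M : Matrix (Fin 7) (Fin 7) ℝ :=
  !![21/8, 0, Real.sqrt 15 / 8, 0, 0, 0, 0;
     0, 0, 0, 0, 0, 0, 0;
     Real.sqrt 15 / 8, 0, 19/8, 0, 0, 0, 0;
     0, 0, 0, 3, 0, 0, 0;
     0, 0, 0, 0, 19/8, 0, -(Real.sqrt 15 / 8);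
     0, 0, 0, 0, 0, 2, 0;
     0, 0, 0, 0, -(Real.sqrt 15 / 8), 0, 21/8]

open Polynomial

/-- Reindexing equivalence grouping coordinates into blocks (0,2), (4,6), (1,3,5). -/
def eM : ((Fin 2 ⊕ Fin 2) ⊕ Fin 3) ≃ Fin 7 where
  toFun x := match x with
    | .inl (.inl i) => ![0, 2] i
    | .inl (.inr i) => ![4, 6] i
    | .inr i => ![1, 3, 5] i
  invFun j := ![.inl (.inl 0), .inr 0, .inl (.inl 1), .inr 1,
                .inl (.inr 0), .inr 2, .inl (.inr 1)] j
  left_inv := by decide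
  right_inv := by decide

noncomputable def A1 : Matrix (Fin 2) (Fin 2) ℝ :=
  !![21/8, Real.sqrt 15 / 8; Real.sqrt 15 / 8, 19/8]
noncomputable def A2 : Matrix (Fin 2) (Fin 2) ℝ :=
  !![19/8, -(Real.sqrt 15 / 8); -(Real.sqrt 15 / 8), 21/8]
noncomputable def D3 : Matrix (Fin 3) (Fin 3) ℝ := !![0,0,0; 0,3,0; 0,0,2]

lemma charpoly_A1 : A1.charpoly = (X - C 2) * (X - C 3) := by
  have h15 : Real.sqrt 15 * Real.sqrt 15 = 15 := Real.mul_self_sqrt (by norm_num)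
  rw [Matrix.charpoly, Matrix.det_fin_two]
  simp [charmatrix_apply, A1, Matrix.one_apply]
  ring_nf
  have h2 : C (Real.sqrt 15 * (1/8)) ^ 2 = C (15/64 : ℝ) := by
    rw [← C_pow]; congr 1; rw [mul_pow, sq, h15]; norm_num
  rw [h2, ← C_mul]
  have e1 : C (21/8:ℝ) + C (19/8) = C 2 + C 3 := by rw [← C_add, ← C_add]; norm_num
  have e2 : C (21/8*(19/8):ℝ) - C (15/64) = C 2 * C 3 := by rw [← C_sub, ← C_mul]; norm_num
  linear_combination (-X) * e1 + e2

lemma charpoly_A2 : A2.charpoly = (X - C 2) * (X - C 3) := by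
  have h15 : Real.sqrt 15 * Real.sqrt 15 = 15 := Real.mul_self_sqrt (by norm_num)
  rw [Matrix.charpoly, Matrix.det_fin_two]
  simp [charmatrix_apply, A2, Matrix.one_apply]
  ring_nf
  have h2 : C (Real.sqrt 15 * (1/8)) ^ 2 = C (15/64 : ℝ) := by
    rw [← C_pow]; congr 1; rw [mul_pow, sq, h15]; norm_num
  rw [h2, ← C_mul]
  have e1 : C (19/8:ℝ) + C (21/8) = C 2 + C 3 := by rw [← C_add, ← C_add]; norm_num
  have e2 : C (19/8*(21/8):ℝ) - C (15/64) = C 2 * C 3 := by rw [← C_sub, ← C_mul]; norm_num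
  linear_combination (-X) * e1 + e2

lemma charpoly_D3 : D3.charpoly = X * (X - C 3) * (X - C 2) := by
  rw [Matrix.charpoly, Matrix.det_fin_three]
  simp [charmatrix_apply, D3, Matrix.one_apply]

lemma reindex_eq : reindex eM eM (fromBlocks (fromBlocks A1 0 0 A2) 0 0 D3) = M := by
  refine Matrix.ext fun i j => ?_
  fin_cases i <;> fin_cases j <;>
    simp [eM, M, A1, A2, D3, fromBlocks, Matrix.cons_val_succ,
      show ((5:Fin 7)) = Fin.succ 4 from rfl, show ((6:Fin 7)) = Fin.succ 5 from rfl,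
      show ((5:Fin 6)) = Fin.succ 4 from rfl, Matrix.cons_val_four,
      Matrix.vecHead, Matrix.vecTail]

theorem M_charpoly :
    M.charpoly = Polynomial.X * (Polynomial.X - Polynomial.C 2)^3 *
      (Polynomial.X - Polynomial.C 3)^3 := by
  rw [← reindex_eq, Matrix.charpoly_reindex, Matrix.charpoly_fromBlocks_zero₁₂,
    Matrix.charpoly_fromBlocks_zero₁₂, charpoly_A1, charpoly_A2, charpoly_D3]
  ring
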